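/- (Birgé–Massart combinatorial lemma.) There exist absolute constants τ > 0 and σ > 0 with the following property: for every integer D ≥ 1 and every finite set Γ with |Γ| = D, there exists a family M of subsets of Γ such that log |M| ≥ σ D and such that for all distinct m, m' ∈ M, the symmetric difference satisfies |m Δ m'| ≥ τ D. -/

import Mathlib

open Real Finset

private lemma bm_choose_step {D i : ℕ} (h : 8 * (i + 1) ≤ D) :
    7 * D.choose i ≤ D.choose (i + 1) := by
  have h1 : D.choose (i+1) * (i+1) = D.choose i * (D - i) := Nat.choose_succ_right_eq D i
  have h2 : 7 * (i+1) ≤ D - i := by omega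
  have h3 : 7 * D.choose i * (i+1) ≤ D.choose (i+1) * (i+1) := by
    calc 7 * D.choose i * (i+1) = D.choose i * (7 * (i+1)) := by ring
    _ ≤ D.choose i * (D - i) := Nat.mul_le_mul_left _ h2
    _ = D.choose (i+1) * (i+1) := h1.symm
  exact Nat.le_of_mul_le_mul_right h3 (Nat.succ_pos i)

private lemma bm_pow_choose {D k : ℕ} (h : 8 * k ≤ D) :
    ∀ j i, i + j ≤ k → 7 ^ j * D.choose i ≤ D.choose (i + j) := by
  intro j
  induction j with
  | zero => intro i _; simpa using le_refl (D.choose i)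
  | succ j ih =>
    intro i hij
    have h1 : 7 ^ j * D.choose i ≤ D.choose (i + j) := ih i (by omega)
    have h2 : 7 * D.choose (i+j) ≤ D.choose (i+j+1) := bm_choose_step (by omega)
    have : 7 ^ (j+1) * D.choose i = 7 * (7 ^ j * D.choose i) := by ring
    rw [show i + (j+1) = i + j + 1 by omega, this]
    calc 7 * (7 ^ j * D.choose i) ≤ 7 * D.choose (i+j) := Nat.mul_le_mul_left 7 h1
    _ ≤ D.choose (i+j+1) := h2

private lemma bm_geom (k : ℕ) : 6 * ∑ i ∈ range (k+1), 7 ^ i ≤ 7 ^ (k+1) := by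
  induction k with
  | zero => simp
  | succ k ih =>
    rw [Finset.sum_range_succ, Nat.mul_add]
    calc 6 * ∑ i ∈ range (k+1), 7^i + 6 * 7^(k+1) ≤ 7^(k+1) + 6*7^(k+1) := by omega
    _ = 7^(k+2) := by ring

private lemma bm_sum_bound {D k : ℕ} (h : 8 * k ≤ D) :
    6 * (7 ^ k * ∑ i ∈ range (k+1), D.choose i) ≤ 7 ^ (k+1) * D.choose k := by
  have h1 : ∀ i ∈ range (k+1), 7 ^ k * D.choose i ≤ 7 ^ i * D.choose k := by
    intro i hi
    simp only [mem_range] at hi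
    have hik : i + (k - i) = k := by omega
    have h2 := bm_pow_choose h (k - i) i (by omega)
    rw [hik] at h2
    calc 7 ^ k * D.choose i = 7 ^ i * (7 ^ (k-i) * D.choose i) := by
          rw [← mul_assoc, ← pow_add, hik]
    _ ≤ 7 ^ i * D.choose k := Nat.mul_le_mul_left _ h2
  have h3 : 7 ^ k * ∑ i ∈ range (k+1), D.choose i ≤ (∑ i ∈ range (k+1), 7 ^ i) * D.choose k := by
    rw [Finset.mul_sum, Finset.sum_mul]; exact Finset.sum_le_sum h1
  calc 6 * (7 ^ k * ∑ i ∈ range (k+1), D.choose i)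
      ≤ 6 * ((∑ i ∈ range (k+1), 7 ^ i) * D.choose k) := Nat.mul_le_mul_left 6 h3
  _ = (6 * ∑ i ∈ range (k+1), 7 ^ i) * D.choose k := by ring
  _ ≤ 7 ^ (k+1) * D.choose k := Nat.mul_le_mul_right _ (bm_geom k)

private lemma bm_binom {D k : ℕ} (hk : k ≤ D) :
    (D.choose k : ℝ) ≤ (8/7) ^ D * 7 ^ k := by
  have h := add_pow (1/7 : ℝ) 1 D
  have hterm : (1/7 : ℝ)^k * 1 ^ (D - k) * D.choose k ≤ ((1/7 : ℝ) + 1)^D := by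
    rw [h]
    exact Finset.single_le_sum (f := fun i => (1/7:ℝ)^i * 1^(D-i) * (D.choose i : ℝ))
      (fun i _ => by positivity) (Finset.mem_range.2 (Nat.lt_succ_of_le hk))
  rw [one_pow, mul_one] at hterm
  have h87 : ((1:ℝ)/7 + 1) = 8/7 := by norm_num
  rw [h87] at hterm
  have h7 : (0:ℝ) < (7:ℝ)^k := by positivity
  have key : (7:ℝ)^k * (1/7)^k = 1 := by
    rw [← mul_pow]; norm_num
  have := mul_le_mul_of_nonneg_left hterm h7.le
  calc (D.choose k : ℝ) = (7:ℝ)^k * (1/7)^k * D.choose k := by rw [key, one_mul]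
  _ = (7:ℝ)^k * ((1/7)^k * D.choose k) := by ring
  _ ≤ (7:ℝ)^k * (8/7)^D := this
  _ = (8/7)^D * 7^k := by ring

private lemma bm_log74 : (3:ℝ)/7 ≤ Real.log (7/4) := by
  have h : Real.log (4/7) ≤ 4/7 - 1 := Real.log_le_sub_one_of_pos (by norm_num)
  have h2 : Real.log (7/4) = - Real.log (4/7) := by
    rw [show (7:ℝ)/4 = (4/7)⁻¹ by norm_num, Real.log_inv]
  rw [h2]; linarith

private lemma bm_log7 : Real.log 7 ≤ 2 := by
  have he := Real.exp_one_gt_d9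
  have h7 : (7:ℝ) ≤ Real.exp 2 := by
    have h2 : Real.exp 2 = Real.exp 1 * Real.exp 1 := by
      rw [← Real.exp_add]; norm_num
    nlinarith
  calc Real.log 7 ≤ Real.log (Real.exp 2) := Real.log_le_log (by norm_num) h7
  _ = 2 := Real.log_exp 2

private lemma bm_log67 : -(1/6 : ℝ) ≤ Real.log (6/7) := by
  have h : Real.log (7/6) ≤ 7/6 - 1 := Real.log_le_sub_one_of_pos (by norm_num)
  have h2 : Real.log (6/7) = - Real.log (7/6) := by
    rw [show (6:ℝ)/7 = (7/6)⁻¹ by norm_num, Real.log_inv]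
  rw [h2]; linarith

/-- Birgé–Massart combinatorial lemma: there are absolute constants `τ, σ > 0` such that
for every finite set `Γ` of cardinality `D ≥ 1` there is a family `M` of subsets of `Γ`
with `log |M| ≥ σ D` and `|m Δ m'| ≥ τ D` for all distinct `m, m' ∈ M`. -/
theorem stmt_13 :
    ∃ τ : ℝ, 0 < τ ∧ ∃ σ : ℝ, 0 < σ ∧
      ∀ (D : ℕ), 1 ≤ D → ∀ (Γ : Type) [Fintype Γ] [DecidableEq Γ],
        Fintype.card Γ = D →
          ∃ M : Finset (Finset Γ),
            σ * D ≤ Real.log M.card ∧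
              ∀ m ∈ M, ∀ m' ∈ M, m ≠ m' → τ * D ≤ ((symmDiff m m').card : ℝ) := by
  classical
  refine ⟨1/8, by norm_num, 1/20, by norm_num, ?_⟩
  intro D hD Γ _ _ hcard
  by_cases hsmall : D < 8
  · -- small case: all subsets
    refine ⟨Finset.univ, ?_, ?_⟩
    · have hcu : (Finset.univ : Finset (Finset Γ)).card = 2 ^ D := by
        rw [Finset.card_univ, Fintype.card_finset, hcard]
      rw [hcu, Nat.cast_pow, Real.log_pow]
      have hl2 : (0.6931471803:ℝ) < Real.log 2 := Real.log_two_gt_d9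
      have hD0 : (0:ℝ) ≤ D := Nat.cast_nonneg D
      push_cast
      nlinarith
    · intro m _ m' _ hne
      have h1 : 1 ≤ (symmDiff m m').card := by
        rw [Nat.one_le_iff_ne_zero, Ne, Finset.card_eq_zero]
        intro h
        apply hne
        have : symmDiff m m' = ⊥ := by rw [h]; rfl
        exact symmDiff_eq_bot.mp this
      have hD8 : (D:ℝ) ≤ 8 := by exact_mod_cast hsmall.le
      have h1' : (1:ℝ) ≤ ((symmDiff m m').card : ℝ) := by exact_mod_cast h1
      linarith
  · -- Gilbert–Varshamov case
    push_neg at hsmall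
    set k := D / 8 with hkdef
    have h8k : 8 * k ≤ D := by omega
    have hkD : k ≤ D := by omega
    let good : Finset (Finset Γ) → Prop := fun M => ∀ m ∈ M, ∀ m' ∈ M, m ≠ m' →
      k + 1 ≤ (symmDiff m m').card
    let S : Finset (Finset (Finset Γ)) := Finset.univ.filter good
    have hSne : S.Nonempty := ⟨∅, by simp [S, good]⟩
    obtain ⟨M, hMS, hMmax⟩ := S.exists_maximal hSne
    have hMgood : good M := (Finset.mem_filter.mp hMS).2
    have hcover : ∀ x : Finset Γ, ∃ m ∈ M, (symmDiff x m).card ≤ k := by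
      intro x
      by_contra hx
      push_neg at hx
      have hxM : x ∉ M := by
        intro hxM
        have := hx x hxM
        simp [symmDiff_self] at this
      have hgood' : good (insert x M) := by
        intro m hm m' hm' hne
        rcases Finset.mem_insert.mp hm with h1 | h1
        · rcases Finset.mem_insert.mp hm' with h2 | h2
          · exact absurd (h1.trans h2.symm) hne
          · rw [h1]; exact hx m' h2
        · rcases Finset.mem_insert.mp hm' with h2 | h2
          · rw [h2, symmDiff_comm]; exact hx m h1
          · exact hMgood m h1 m' h2 hne
      have hmem : insert x M ∈ S := Finset.mem_filter.mpr ⟨Finset.mem_univ _, hgood'⟩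
      exact hxM (hMmax hmem (Finset.subset_insert x M) (Finset.mem_insert_self x M))
    -- counting
    have hball : ∀ m : Finset Γ,
        (Finset.univ.filter fun x => (symmDiff x m).card ≤ k).card
          = (Finset.univ.filter fun y : Finset Γ => y.card ≤ k).card := by
      intro m
      apply Finset.card_nbij (fun x => symmDiff x m)
      · intro a ha
        simp only [Finset.mem_coe, Finset.mem_filter, Finset.mem_univ, true_and] at ha ⊢
        exact ha
      · intro a _ b _ hab
        have hab' : symmDiff a m = symmDiff b m := hab
        apply symmDiff_right_injective m
        show symmDiff m a = symmDiff m b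
        rw [symmDiff_comm m a, symmDiff_comm m b]
        exact hab'
      · intro y hy
        simp only [Finset.coe_filter, Finset.mem_univ, true_and, Set.mem_setOf_eq,
          Set.mem_image] at hy ⊢
        exact ⟨symmDiff y m, by simpa [symmDiff_assoc, symmDiff_self, symmDiff_bot] using hy,
          by simp [symmDiff_assoc, symmDiff_self, symmDiff_bot]⟩
    have hBcard : (Finset.univ.filter fun y : Finset Γ => y.card ≤ k).card
        ≤ ∑ i ∈ range (k+1), D.choose i := by
      have hsub : (Finset.univ.filter fun y : Finset Γ => y.card ≤ k) ⊆
          (Finset.range (k+1)).biUnion (fun i => (Finset.univ : Finset Γ).powersetCard i) := by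
        intro y hy
        simp only [Finset.mem_filter, Finset.mem_univ, true_and] at hy
        refine Finset.mem_biUnion.mpr ⟨y.card, Finset.mem_range.mpr (by omega), ?_⟩
        simp [Finset.mem_powersetCard]
      calc (Finset.univ.filter fun y : Finset Γ => y.card ≤ k).card
          ≤ ((Finset.range (k+1)).biUnion fun i => (Finset.univ : Finset Γ).powersetCard i).card :=
            Finset.card_le_card hsub
      _ ≤ ∑ i ∈ range (k+1), ((Finset.univ : Finset Γ).powersetCard i).card :=
            Finset.card_biUnion_le
      _ = ∑ i ∈ range (k+1), D.choose i := by
            apply Finset.sum_congr rfl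
            intro i _
            rw [Finset.card_powersetCard, Finset.card_univ, hcard]
    have hcount : 2 ^ D ≤ M.card * (Finset.univ.filter fun y : Finset Γ => y.card ≤ k).card := by
      calc 2 ^ D = (Finset.univ : Finset (Finset Γ)).card := by
            rw [Finset.card_univ, Fintype.card_finset, hcard]
      _ ≤ (M.biUnion fun m => Finset.univ.filter fun x => (symmDiff x m).card ≤ k).card := by
            apply Finset.card_le_card
            intro x _
            obtain ⟨m, hm, hxm⟩ := hcover x
            exact Finset.mem_biUnion.mpr ⟨m, hm, Finset.mem_filter.mpr ⟨Finset.mem_univ _, hxm⟩⟩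
      _ ≤ ∑ m ∈ M, (Finset.univ.filter fun x => (symmDiff x m).card ≤ k).card :=
            Finset.card_biUnion_le
      _ = ∑ m ∈ M, (Finset.univ.filter fun y : Finset Γ => y.card ≤ k).card :=
            Finset.sum_congr rfl (fun m _ => hball m)
      _ = M.card * _ := by rw [Finset.sum_const, smul_eq_mul]
    -- nat chain
    have hnat : 6 * 7^k * 2^D ≤ M.card * (7^(k+1) * D.choose k) := by
      calc 6 * 7^k * 2^D
          ≤ 6 * 7^k * (M.card * (Finset.univ.filter fun y : Finset Γ => y.card ≤ k).card) :=
            Nat.mul_le_mul_left _ hcount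
      _ ≤ 6 * 7^k * (M.card * ∑ i ∈ range (k+1), D.choose i) :=
            Nat.mul_le_mul_left _ (Nat.mul_le_mul_left _ hBcard)
      _ = M.card * (6 * (7^k * ∑ i ∈ range (k+1), D.choose i)) := by ring
      _ ≤ M.card * (7^(k+1) * D.choose k) := Nat.mul_le_mul_left _ (bm_sum_bound h8k)
    -- to real
    have hreal : (6:ℝ) * 7^k * 2^D ≤ (M.card:ℝ) * (7^(k+1) * ((8/7)^D * 7^k)) := by
      have h1 : (6:ℝ) * 7^k * 2^D ≤ (M.card:ℝ) * (7^(k+1) * (D.choose k : ℝ)) := by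
        exact_mod_cast hnat
      have h2 := bm_binom hkD
      have hM0 : (0:ℝ) ≤ (M.card:ℝ) := Nat.cast_nonneg _
      calc (6:ℝ) * 7^k * 2^D ≤ (M.card:ℝ) * (7^(k+1) * (D.choose k : ℝ)) := h1
      _ ≤ (M.card:ℝ) * (7^(k+1) * ((8/7)^D * 7^k)) := by
          apply mul_le_mul_of_nonneg_left _ hM0
          exact mul_le_mul_of_nonneg_left h2 (by positivity)
    have h7k : (0:ℝ) < (7:ℝ)^k := by positivity
    have hmul : ((7:ℝ)/4)^D * ((8:ℝ)/7)^D = 2^D := by rw [← mul_pow]; norm_num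
    have h6a : 6 * ((7:ℝ)/4)^D ≤ 7 * (M.card:ℝ) * 7^k := by
      have hbp : (0:ℝ) < ((8:ℝ)/7)^D * 7^k := by positivity
      apply le_of_mul_le_mul_right _ hbp
      calc 6 * ((7:ℝ)/4)^D * (((8:ℝ)/7)^D * 7^k)
          = 6 * 7^k * (((7:ℝ)/4)^D * ((8:ℝ)/7)^D) := by ring
      _ = 6 * 7^k * 2^D := by rw [hmul]
      _ ≤ (M.card:ℝ) * (7^(k+1) * (((8:ℝ)/7)^D * 7^k)) := hreal
      _ = 7 * (M.card:ℝ) * 7^k * (((8:ℝ)/7)^D * 7^k) := by rw [pow_succ]; ring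
    have hc : (6/7 : ℝ) * (7/4)^D / 7^k ≤ (M.card:ℝ) := by
      rw [div_le_iff₀ h7k]
      linarith
    have hL0 : (0:ℝ) < (6/7 : ℝ) * (7/4)^D / 7^k := by positivity
    have hlog : Real.log ((6/7 : ℝ) * (7/4)^D / 7^k) ≤ Real.log (M.card:ℝ) :=
      Real.log_le_log hL0 hc
    have hLlog : Real.log ((6/7 : ℝ) * (7/4)^D / 7^k)
        = Real.log (6/7) + D * Real.log (7/4) - k * Real.log 7 := by
      rw [Real.log_div (by positivity) (by positivity),
        Real.log_mul (by norm_num) (by positivity), Real.log_pow, Real.log_pow]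
    have hD0 : (0:ℝ) ≤ (D:ℝ) := Nat.cast_nonneg D
    have hk0 : (0:ℝ) ≤ (k:ℝ) := Nat.cast_nonneg k
    have hk8 : (k:ℝ) ≤ (D:ℝ)/8 := by
      have h8 : (8:ℝ) * k ≤ D := by exact_mod_cast h8k
      linarith
    have hD8 : (8:ℝ) ≤ (D:ℝ) := by exact_mod_cast hsmall
    have p1 : (D:ℝ) * (3/7) ≤ (D:ℝ) * Real.log (7/4) :=
      mul_le_mul_of_nonneg_left bm_log74 hD0
    have hs0 : (0:ℝ) ≤ Real.log 7 := Real.log_nonneg (by norm_num)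
    have p2 : (k:ℝ) * Real.log 7 ≤ ((D:ℝ)/8) * 2 := by
      calc (k:ℝ) * Real.log 7 ≤ (k:ℝ) * 2 := mul_le_mul_of_nonneg_left bm_log7 hk0
      _ ≤ ((D:ℝ)/8) * 2 := by linarith
    have h67 := bm_log67
    refine ⟨M, ?_, ?_⟩
    · have final : (1:ℝ)/20 * (D:ℝ) ≤ Real.log (6/7) + (D:ℝ) * Real.log (7/4) - (k:ℝ) * Real.log 7 := by
        linarith
      calc (1:ℝ)/20 * (D:ℝ)
          ≤ Real.log (6/7) + (D:ℝ) * Real.log (7/4) - (k:ℝ) * Real.log 7 := final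
      _ = Real.log ((6/7 : ℝ) * (7/4)^D / 7^k) := hLlog.symm
      _ ≤ Real.log (M.card:ℝ) := hlog
    · intro m hm m' hm' hne
      have hd := hMgood m hm m' hm' hne
      have hd' : (k:ℝ) + 1 ≥ (D:ℝ)/8 := by
        have : D < 8 * (k + 1) := by omega
        have : (D:ℝ) < 8 * ((k:ℝ) + 1) := by exact_mod_cast this
        linarith
      have hd'' : ((k:ℝ) + 1) ≤ ((symmDiff m m').card : ℝ) := by exact_mod_cast hd
      linarith
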